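/- Let f ∈ ℂ[x₁,…,x_n] with f(0)=0 be convenient and non-degenerate at 0. Then the origin is either a smooth point or an isolated singular point of the hypersurface V = f^{-1}(0). -/

import Mathlib

/-!
STATEMENT 18: If `f ∈ ℂ[x₁,…,xₙ]` with `f(0) = 0` is convenient and non-degenerate at
`0`, then the origin is a smooth point or an isolated singular point of
`V = f⁻¹(0)`; i.e. in a small ball around `0`, no point of `V` other than `0` is a
critical point of `f` lying on `V`.
-/

open scoped Classical

noncomputable section

/-- The Newton polyhedron `Γ₊(f)` of `f` at the origin: the convex hull of
`⋃_{α ∈ supp f} (α + ℝⁿ_{≥0})`. -/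
def NewtonPolyhedron {n : ℕ} (f : MvPolynomial (Fin n) ℂ) : Set (Fin n → ℝ) :=
  convexHull ℝ (⋃ α ∈ (f.support : Set (Fin n →₀ ℕ)), {x | ∀ i, (α i : ℝ) ≤ x i})

/-- `F` is a (nonempty) face of the convex set `P`. -/
def IsFaceOf {n : ℕ} (P F : Set (Fin n → ℝ)) : Prop :=
  IsExtreme ℝ P F ∧ Convex ℝ F ∧ F.Nonempty

/-- The truncation `f_F` of `f` to the monomials whose exponents lie in `F`. -/
def facePoly {n : ℕ} (f : MvPolynomial (Fin n) ℂ) (F : Set (Fin n → ℝ)) :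
    MvPolynomial (Fin n) ℂ :=
  ∑ α ∈ f.support, if (fun i => (α i : ℝ)) ∈ F
    then MvPolynomial.monomial α (MvPolynomial.coeff α f) else 0

/-- `f` is non-degenerate at `0`: for every compact face `F` of `Γ₊(f)`, the
hypersurface `{f_F = 0}` is smooth and reduced in the torus `(ℂ*)ⁿ`, i.e. `f_F` has
no critical point on it with all coordinates nonzero. -/
def NondegenerateAtZero {n : ℕ} (f : MvPolynomial (Fin n) ℂ) : Prop :=
  ∀ F : Set (Fin n → ℝ), IsFaceOf (NewtonPolyhedron f) F → IsCompact F →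
    ∀ x : Fin n → ℂ, (∀ i, x i ≠ 0) → MvPolynomial.eval x (facePoly f F) = 0 →
      ∃ i, MvPolynomial.eval x (MvPolynomial.pderiv i (facePoly f F)) ≠ 0

/-- `f` is convenient: `Γ₊(f)` meets the positive part of every coordinate axis. -/
def Convenient {n : ℕ} (f : MvPolynomial (Fin n) ℂ) : Prop :=
  ∀ i : Fin n, ∃ α ∈ f.support, 0 < α i ∧ ∀ j, j ≠ i → α j = 0

open Filter MvPolynomial Topology

variable {n : ℕ}

/-- full monomial product -/
def Pmon (α : Fin n →₀ ℕ) (x : Fin n → ℂ) : ℂ := ∏ i, x i ^ α i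

lemma eval_monomial' (α : Fin n →₀ ℕ) (c : ℂ) (x : Fin n → ℂ) :
    eval x (monomial α c) = c * Pmon α x := by
  rw [eval_monomial, Finsupp.prod_fintype]
  · rfl
  · intro i; simp

lemma eval_eq_sum' (f : MvPolynomial (Fin n) ℂ) (x : Fin n → ℂ) :
    eval x f = ∑ α ∈ f.support, coeff α f * Pmon α x := by
  conv_lhs => rw [f.as_sum]
  rw [map_sum]
  exact Finset.sum_congr rfl fun α _ => eval_monomial' α _ x

lemma mul_eval_pderiv_monomial (α : Fin n →₀ ℕ) (c : ℂ) (x : Fin n → ℂ) (j : Fin n) :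
    x j * eval x (pderiv j (monomial α c)) = c * (α j : ℂ) * Pmon α x := by
  rw [pderiv_monomial, eval_monomial']
  rcases Nat.eq_zero_or_pos (α j) with h | h
  · simp [h]
  · have key : x j * Pmon (α - Finsupp.single j 1) x = Pmon α x := by
      unfold Pmon
      rw [← Finset.mul_prod_erase Finset.univ _ (Finset.mem_univ j),
          ← Finset.mul_prod_erase Finset.univ _ (Finset.mem_univ j), ← mul_assoc]
      congr 1
      · rw [Finsupp.tsub_apply, Finsupp.single_apply, if_pos rfl]
        rw [← pow_succ']
        congr 1
        omega
      · apply Finset.prod_congr rfl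
        intro i hi
        have hne : i ≠ j := (Finset.mem_erase.mp hi).1
        rw [Finsupp.tsub_apply, Finsupp.single_apply, if_neg (Ne.symm hne), Nat.sub_zero]
    calc x j * (c * ↑(α j) * Pmon (α - Finsupp.single j 1) x)
        = c * ↑(α j) * (x j * Pmon (α - Finsupp.single j 1) x) := by ring
      _ = c * ↑(α j) * Pmon α x := by rw [key]

lemma Pmon_eq_zero {α : Fin n →₀ ℕ} {x : Fin n → ℂ} {i : Fin n}
    (hx : x i = 0) (hα : α i ≠ 0) : Pmon α x = 0 :=
  Finset.prod_eq_zero (Finset.mem_univ i) (by rw [hx]; exact zero_pow hα)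

/-- evaluation of the derivative, multiplied by the coordinate -/
lemma mul_eval_pderiv (f : MvPolynomial (Fin n) ℂ) (x : Fin n → ℂ) (j : Fin n) :
    x j * eval x (pderiv j f) = ∑ α ∈ f.support, coeff α f * (α j : ℂ) * Pmon α x := by
  conv_lhs => rw [f.as_sum]
  rw [map_sum, map_sum, Finset.mul_sum]
  exact Finset.sum_congr rfl fun α _ => mul_eval_pderiv_monomial α _ x j

lemma ultra_limit {X : Type*} [TopologicalSpace X] (ℱ : Ultrafilter ℕ) {s : Set X}
    (hs : IsCompact s) {z : ℕ → X} (hz : ∀ᶠ k in (ℱ : Filter ℕ), z k ∈ s) :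
    ∃ a ∈ s, Tendsto z ℱ (𝓝 a) := by
  have hle : ↑(ℱ.map z) ≤ 𝓟 s := by
    rw [Ultrafilter.coe_map, Filter.le_principal_iff, Filter.mem_map]
    exact hz
  obtain ⟨a, ha, hten⟩ := hs.ultrafilter_le_nhds (ℱ.map z) hle
  exact ⟨a, ha, hten⟩

lemma ultra_const {β : Type*} (ℱ : Ultrafilter ℕ) {s : Finset β} {z : ℕ → β}
    (hz : ∀ k, z k ∈ s) : ∃ b ∈ s, ∀ᶠ k in (ℱ : Filter ℕ), z k = b := by
  by_contra hcon
  push_neg at hcon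
  have h1 : ∀ b ∈ s, ∀ᶠ k in (ℱ : Filter ℕ), z k ≠ b := by
    intro b hb
    exact hcon b hb
  have h2 : ∀ᶠ k in (ℱ : Filter ℕ), ∀ b ∈ s, z k ≠ b :=
    (Filter.eventually_all_finset s).mpr h1
  obtain ⟨k, hk⟩ := h2.exists
  exact hk (z k) (hz k) rfl
open Filter Topology

variable {n : ℕ}

def toE (y : Fin n → ℝ) : EuclideanSpace ℝ (Fin n) := (WithLp.equiv 2 (Fin n → ℝ)).symm y

lemma inner_toE (y z : Fin n → ℝ) :
    (inner ℝ (toE y) (toE z) : ℝ) = ∑ i, y i * z i := by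
  rw [PiLp.inner_apply]; exact Finset.sum_congr rfl fun i _ => by simp [toE, mul_comm]

lemma toE_apply (y : Fin n → ℝ) (i : Fin n) : toE y i = y i := rfl

lemma g_expand (g : (Fin n → ℝ) →ₗ[ℝ] ℝ) (y : Fin n → ℝ) :
    g y = ∑ i, y i * g (Pi.single i 1) := by
  conv_lhs => rw [← Finset.univ_sum_single y]
  rw [map_sum]
  apply Finset.sum_congr rfl
  intro i _
  have h1 : Pi.single i (y i) = y i • (Pi.single i (1:ℝ) : Fin n → ℝ) := by
    rw [← Pi.single_smul, smul_eq_mul, mul_one]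
  rw [h1, map_smul, smul_eq_mul]

lemma lincomb_eval {ι : Type*} [DecidableEq ι] (V : ι → Fin n → ℝ) (t : ι →₀ ℝ) (i : Fin n) :
    (Finsupp.linearCombination ℝ V t) i = ∑ a ∈ t.support, t a * V a i := by
  rw [Finsupp.linearCombination_apply, Finsupp.sum, Finset.sum_apply]
  apply Finset.sum_congr rfl
  intro a _
  simp

lemma core_la {ι : Type*} (ℱ : Ultrafilter ℕ) (w : ℕ → Fin n → ℝ)
    (S B : Finset ι) (V : ι → Fin n → ℝ) (α₀ : Fin n → ℝ) (ℓ : ι → ℝ)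
    (hW1 : ∀ i, Tendsto (fun k => w k i) ℱ atTop)
    (hW2 : ∀ a ∈ S, Tendsto (fun k => ∑ i, w k i * (V a i - α₀ i)) ℱ (𝓝 (ℓ a)))
    (hW3 : ∀ b ∈ B, Tendsto (fun k => ∑ i, w k i * (V b i - α₀ i)) ℱ atTop) :
    ∃ p : Fin n → ℝ, (∀ i, 0 < p i) ∧ (∀ a ∈ S, ∑ i, p i * (V a i - α₀ i) = 0) ∧
      (∀ b ∈ B, 0 < ∑ i, p i * (V b i - α₀ i)) ∧
      ∃ g : (Fin n → ℝ) →ₗ[ℝ] ℝ, ∀ a ∈ S, g (V a - α₀) = ℓ a := by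
  classical
  -- Step 1: the linear functional g
  set h : ({a : ι // a ∈ S} →₀ ℝ) →ₗ[ℝ] (Fin n → ℝ) :=
    Finsupp.linearCombination ℝ (fun a => V a.1 - α₀) with hh
  set e : ({a : ι // a ∈ S} →₀ ℝ) →ₗ[ℝ] ℝ :=
    Finsupp.linearCombination ℝ (fun a => ℓ a.1) with he
  have hker : LinearMap.ker h ≤ LinearMap.ker e := by
    intro t ht
    rw [LinearMap.mem_ker] at ht ⊢
    have key : ∀ k, ∑ a ∈ t.support, t a * (∑ i, w k i * (V a.1 i - α₀ i)) = 0 := by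
      intro k
      calc ∑ a ∈ t.support, t a * (∑ i, w k i * (V a.1 i - α₀ i))
          = ∑ i, w k i * (∑ a ∈ t.support, t a * (V a.1 i - α₀ i)) := by
            simp only [Finset.mul_sum]
            rw [Finset.sum_comm]
            apply Finset.sum_congr rfl; intro i _
            apply Finset.sum_congr rfl; intro a _
            ring
        _ = ∑ i, w k i * (h t i) := by
            apply Finset.sum_congr rfl; intro i _
            rw [hh, lincomb_eval]
            apply congrArg
            apply Finset.sum_congr rfl; intro a _
            simp [Pi.sub_apply]
        _ = 0 := by rw [ht]; simp
    have hten : Tendsto (fun k => ∑ a ∈ t.support, t a * (∑ i, w k i * (V a.1 i - α₀ i)))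
        ℱ (𝓝 (∑ a ∈ t.support, t a * ℓ a.1)) := by
      apply tendsto_finset_sum
      intro a _
      exact (hW2 a.1 a.2).const_mul _
    have h0 : Tendsto (fun k => ∑ a ∈ t.support, t a * (∑ i, w k i * (V a.1 i - α₀ i)))
        (ℱ : Filter ℕ) (𝓝 0) := by
      simp only [key]; exact tendsto_const_nhds
    have := tendsto_nhds_unique hten h0
    rw [he, Finsupp.linearCombination_apply, Finsupp.sum]
    simpa [smul_eq_mul] using this
  -- factor e through range of h
  set gq : (({a : ι // a ∈ S} →₀ ℝ) ⧸ LinearMap.ker h) →ₗ[ℝ] ℝ :=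
    (LinearMap.ker h).liftQ e hker with hgq
  set gex : (LinearMap.range h) →ₗ[ℝ] ℝ :=
    gq ∘ₗ (LinearMap.quotKerEquivRange h).symm.toLinearMap with hgex
  obtain ⟨g, hg⟩ := LinearMap.exists_extend gex
  have hgS : ∀ a ∈ S, g (V a - α₀) = ℓ a := by
    intro a ha
    have h1 : h (Finsupp.single ⟨a, ha⟩ 1) = V a - α₀ := by
      rw [hh, Finsupp.linearCombination_single, one_smul]
    have hmem : V a - α₀ ∈ LinearMap.range h := ⟨_, h1⟩
    have h2 : g (V a - α₀) = gex ⟨V a - α₀, hmem⟩ := by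
      have := congrArg (fun (m : (LinearMap.range h) →ₗ[ℝ] ℝ) => m ⟨V a - α₀, hmem⟩) hg
      simpa using this
    rw [h2, hgex]
    have h3 : (LinearMap.quotKerEquivRange h) (Submodule.Quotient.mk (Finsupp.single ⟨a, ha⟩ 1))
        = ⟨V a - α₀, hmem⟩ := by
      apply Subtype.ext
      rw [LinearMap.quotKerEquivRange_apply_mk]
      exact h1
    rw [← h3]
    simp only [LinearMap.coe_comp, Function.comp_apply, LinearEquiv.coe_coe,
      LinearEquiv.symm_apply_apply]
    rw [hgq, Submodule.liftQ_apply, he, Finsupp.linearCombination_single, one_smul]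
  -- Step 2: the positive vector p
  set wv : Fin n → ℝ := fun i => g (Pi.single i 1) with hwv
  have hginner : ∀ y : Fin n → ℝ, (inner ℝ (toE wv) (toE y) : ℝ) = g y := by
    intro y
    rw [inner_toE, g_expand g y]
    apply Finset.sum_congr rfl
    intro i _
    rw [hwv]; ring
  set Vsp : Submodule ℝ (EuclideanSpace ℝ (Fin n)) :=
    Submodule.span ℝ ((fun a => toE (V a - α₀)) '' (S : Set ι)) with hVsp
  set v : ℕ → EuclideanSpace ℝ (Fin n) := fun k => toE (w k) - toE wv with hv
  have hvinner : ∀ (k : ℕ) (y : Fin n → ℝ),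
      (inner ℝ (v k) (toE y) : ℝ) = (∑ i, w k i * y i) - g y := by
    intro k y
    rw [hv]
    simp only [inner_sub_left]
    rw [inner_toE, hginner]
  have H0 : ∀ y ∈ Vsp, Tendsto (fun k => (inner ℝ (v k) y : ℝ)) ℱ (𝓝 0) := by
    intro y hy
    induction hy using Submodule.span_induction with
    | mem z hz =>
      obtain ⟨a, ha, rfl⟩ := hz
      have h1 : ∀ k, (inner ℝ (v k) (toE (V a - α₀)) : ℝ)
          = (∑ i, w k i * (V a i - α₀ i)) - g (V a - α₀) := by
        intro k
        rw [hvinner k (V a - α₀)]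
        congr 1
        all_goals first
          | rfl
          | (apply Finset.sum_congr rfl; intro i _; simp [Pi.sub_apply])
      simp only [h1, hgS a ha]
      have := (hW2 a ha).sub_const (ℓ a)
      simpa using this
    | zero => simpa using tendsto_const_nhds
    | add z₁ z₂ hz₁ hz₂ ih₁ ih₂ =>
      have := ih₁.add ih₂
      simpa [inner_add_right] using this
    | smul c z hz ih =>
      have := ih.const_mul c
      simpa [inner_smul_right] using this
  set q : ℕ → EuclideanSpace ℝ (Fin n) :=
    fun k => (Submodule.orthogonalProjectionOnto Vsp (v k) : EuclideanSpace ℝ (Fin n)) with hq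
  have hqperp : ∀ k, v k - q k ∈ Vspᗮ := fun k => Submodule.sub_starProjection_mem_orthogonal (K := Vsp) (v k)
  have hq0 : Tendsto q ℱ (𝓝 0) := by
    set b := stdOrthonormalBasis ℝ Vsp with hb
    have hrepr : ∀ k, q k = ∑ j, (inner ℝ ((b j : EuclideanSpace ℝ (Fin n))) (v k) : ℝ)
        • (b j : EuclideanSpace ℝ (Fin n)) := by
      intro k
      have h1 : (Submodule.orthogonalProjectionOnto Vsp (v k) : Vsp)
          = ∑ j, b.repr (Submodule.orthogonalProjectionOnto Vsp (v k)) j • b j :=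
        (b.sum_repr _).symm
      have h2 : ∀ j, b.repr (Submodule.orthogonalProjectionOnto Vsp (v k)) j
          = (inner ℝ ((b j : EuclideanSpace ℝ (Fin n))) (v k) : ℝ) := by
        intro j
        rw [b.repr_apply_apply]
        have h3 : (inner ℝ (b j) (Submodule.orthogonalProjectionOnto Vsp (v k)) : ℝ)
            = (inner ℝ ((b j : EuclideanSpace ℝ (Fin n))) (q k) : ℝ) := rfl
        rw [h3]
        have h4 : (inner ℝ ((b j : EuclideanSpace ℝ (Fin n))) (v k - q k) : ℝ) = 0 :=
          (Submodule.mem_orthogonal Vsp _).mp (hqperp k) _ (b j).2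
        have h5 := inner_sub_right (𝕜 := ℝ) ((b j : EuclideanSpace ℝ (Fin n))) (v k) (q k)
        rw [h4] at h5
        linarith [h5]
      calc q k = ((∑ j, b.repr (Submodule.orthogonalProjectionOnto Vsp (v k)) j • b j : Vsp)
          : EuclideanSpace ℝ (Fin n)) := by rw [← h1]
        _ = ∑ j, b.repr (Submodule.orthogonalProjectionOnto Vsp (v k)) j • (b j : EuclideanSpace ℝ (Fin n)) := by
            push_cast; rfl
        _ = ∑ j, (inner ℝ ((b j : EuclideanSpace ℝ (Fin n))) (v k) : ℝ)
            • (b j : EuclideanSpace ℝ (Fin n)) := by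
            apply Finset.sum_congr rfl; intro j _; rw [h2]
    rw [show (0 : EuclideanSpace ℝ (Fin n)) = ∑ j : Fin (Module.finrank ℝ Vsp),
        (0:ℝ) • (b j : EuclideanSpace ℝ (Fin n)) by simp]
    apply Tendsto.congr (fun k => (hrepr k).symm)
    apply tendsto_finset_sum
    intro j _
    apply Tendsto.smul_const
    have hmem : ((b j : EuclideanSpace ℝ (Fin n))) ∈ Vsp := (b j).2
    have := H0 _ hmem
    apply Tendsto.congr _ this
    intro k
    exact real_inner_comm _ _
  have hqcoord : ∀ i, Tendsto (fun k => q k i) ℱ (𝓝 0) := by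
    intro i
    have hc : Continuous (fun z : EuclideanSpace ℝ (Fin n) => z i) :=
      (continuous_apply i).comp (PiLp.continuous_ofLp 2 _)
    have := (hc.tendsto 0).comp hq0
    exact this
  have hvcoord : ∀ i, Tendsto (fun k => v k i) ℱ atTop := by
    intro i
    have : (fun k => v k i) = fun k => w k i + (- wv i) := by
      funext k; rw [hv]; simp [toE_apply]; ring
    rw [this]
    exact (hW1 i).atTop_add tendsto_const_nhds
  have hEv1 : ∀ᶠ k in (ℱ : Filter ℕ), ∀ i, 0 < v k i - q k i := by
    rw [eventually_all]
    intro i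
    have : Tendsto (fun k => v k i - q k i) ℱ atTop :=
      (hvcoord i).atTop_add (hqcoord i).neg
    exact this.eventually_gt_atTop 0
  have hEv2 : ∀ᶠ k in (ℱ : Filter ℕ), ∀ b ∈ B,
      0 < (inner ℝ (v k - q k) (toE (V b - α₀)) : ℝ) := by
    rw [Filter.eventually_all_finset]
    intro b hb
    have h1 : Tendsto (fun k => (inner ℝ (v k) (toE (V b - α₀)) : ℝ)) ℱ atTop := by
      have heq : ∀ k, (inner ℝ (v k) (toE (V b - α₀)) : ℝ)
          = (∑ i, w k i * (V b i - α₀ i)) + (- g (V b - α₀)) := by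
        intro k
        rw [hvinner k (V b - α₀)]
        have : ∑ i, w k i * ((V b - α₀) i) = ∑ i, w k i * (V b i - α₀ i) :=
          Finset.sum_congr rfl fun i _ => by simp [Pi.sub_apply]
        rw [this]; ring
      simp only [heq]
      exact (hW3 b hb).atTop_add tendsto_const_nhds
    have h2 : Tendsto (fun k => (inner ℝ (q k) (toE (V b - α₀)) : ℝ)) ℱ (𝓝 0) := by
      have := Filter.Tendsto.inner (𝕜 := ℝ) hq0 (tendsto_const_nhds (x := toE (V b - α₀)))
      simpa using this
    have h3 : Tendsto (fun k => (inner ℝ (v k - q k) (toE (V b - α₀)) : ℝ)) ℱ atTop := by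
      have := h1.atTop_add h2.neg
      apply Tendsto.congr _ this
      intro k
      rw [inner_sub_left (𝕜 := ℝ) (v k) (q k) (toE (V b - α₀))]
      ring
    exact h3.eventually_gt_atTop 0
  obtain ⟨k, hk1, hk2⟩ := (hEv1.and hEv2).exists
  refine ⟨fun i => v k i - q k i, hk1, ?_, ?_, g, hgS⟩
  · intro a ha
    have hmem : toE (V a - α₀) ∈ Vsp :=
      Submodule.subset_span ⟨a, ha, rfl⟩
    have h4 : (inner ℝ (v k - q k) (toE (V a - α₀)) : ℝ) = 0 := by
      have := (Submodule.mem_orthogonal Vsp _).mp (hqperp k) _ hmem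
      rw [real_inner_comm] at this
      exact this
    have h5 : (inner ℝ (v k - q k) (toE (V a - α₀)) : ℝ)
        = ∑ i, (v k i - q k i) * (V a i - α₀ i) := by
      rw [PiLp.inner_apply]
      apply Finset.sum_congr rfl
      intro i _
      simp only [RCLike.inner_apply, conj_trivial, toE,
        Pi.sub_apply]
      simp [mul_comm]
    show ∑ i, (v k i - q k i) * (V a i - α₀ i) = 0
    rw [← h5]
    exact h4
  · intro b hb
    have h5 : (inner ℝ (v k - q k) (toE (V b - α₀)) : ℝ)
        = ∑ i, (v k i - q k i) * (V b i - α₀ i) := by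
      rw [PiLp.inner_apply]
      apply Finset.sum_congr rfl
      intro i _
      simp only [RCLike.inner_apply, conj_trivial, toE,
        Pi.sub_apply]
      simp [mul_comm]
    have := hk2 b hb
    rw [h5] at this
    exact this


lemma seg_eq {a b u v d : ℝ} (ha : 0 < a) (hb : 0 < b) (hab : a + b = 1)
    (hu : d ≤ u) (hv : d ≤ v) (he : a * u + b * v = d) : u = d ∧ v = d := by
  have h1 : 0 ≤ a * (u - d) := by nlinarith
  have h2 : 0 ≤ b * (v - d) := by nlinarith
  have h3 : a * (u - d) + b * (v - d) = 0 := by linear_combination he - d * hab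
  have h4 : a * (u - d) = 0 := by linarith
  have h5 : b * (v - d) = 0 := by linarith
  constructor
  · rcases mul_eq_zero.mp h4 with h | h
    · exact absurd h (ne_of_gt ha)
    · linarith
  · rcases mul_eq_zero.mp h5 with h | h
    · exact absurd h (ne_of_gt hb)
    · linarith

set_option maxHeartbeats 2000000 in
theorem convenient_nondegenerate_isolated_singularity
    (n : ℕ) (f : MvPolynomial (Fin n) ℂ)
    (hf0 : MvPolynomial.coeff 0 f = 0)
    (hconv : Convenient f)
    (hnd : NondegenerateAtZero f) :
    ∃ ε : ℝ, 0 < ε ∧ ∀ x : Fin n → ℂ, ‖x‖ < ε → x ≠ 0 →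
      ¬ (MvPolynomial.eval x f = 0 ∧
          ∀ i, MvPolynomial.eval x (MvPolynomial.pderiv i f) = 0) := by
  classical
  by_contra hcon
  push_neg at hcon
  have hseq : ∀ k : ℕ, ∃ x : Fin n → ℂ, ‖x‖ < 1/(k+1) ∧ x ≠ 0 ∧
      eval x f = 0 ∧ ∀ i, eval x (pderiv i f) = 0 := by
    intro k
    obtain ⟨x, h1, h2, h3⟩ := hcon (1/(k+1)) (by positivity)
    exact ⟨x, h1, h2, h3⟩
  choose x hxnorm hxne hxf hxd using hseq
  set ℱ : Ultrafilter ℕ := Ultrafilter.of atTop with hℱdef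
  have hle : (ℱ : Filter ℕ) ≤ atTop := Ultrafilter.of_le atTop
  have hinv0 : Tendsto (fun k : ℕ => 1/((k:ℝ)+1)) atTop (𝓝 0) :=
    tendsto_one_div_add_atTop_nhds_zero_nat
  have hxicoord : ∀ i, Tendsto (fun k => ‖x k i‖) (ℱ : Filter ℕ) (𝓝 0) := by
    intro i
    refine Tendsto.mono_left ?_ hle
    apply squeeze_zero (fun k => norm_nonneg _) (fun k => ?_) hinv0
    exact le_trans (norm_le_pi_norm (x k) i) (le_of_lt (hxnorm k))
  have hxsmall : ∀ k i, ‖x k i‖ < 1 := by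
    intro k i
    calc ‖x k i‖ ≤ ‖x k‖ := norm_le_pi_norm (x k) i
      _ < 1/(k+1) := hxnorm k
      _ ≤ 1 := by
          rw [div_le_one (by positivity)]
          have : (0:ℝ) ≤ k := Nat.cast_nonneg k
          linarith
  -- the zero pattern
  obtain ⟨A, -, hA⟩ := ultra_const ℱ (s := (Finset.univ : Finset (Finset (Fin n))))
    (z := fun k => Finset.univ.filter (fun i => x k i = 0)) (fun k => Finset.mem_univ _)
  have hAiff : ∀ᶠ k in (ℱ : Filter ℕ), ∀ i, (x k i = 0 ↔ i ∈ A) := by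
    filter_upwards [hA] with k hk i
    rw [← hk]
    simp
  obtain ⟨j₀, hj₀⟩ : ∃ j₀, j₀ ∉ A := by
    obtain ⟨k, hk⟩ := hAiff.exists
    obtain ⟨i, hi⟩ := Function.ne_iff.mp (hxne k)
    exact ⟨i, fun hmem => hi (by simpa using (hk i).mpr hmem)⟩
  -- the truncated support
  set T : Finset (Fin n →₀ ℕ) := f.support.filter (fun α => ∀ i ∈ A, α i = 0) with hTdef
  have hTsub : T ⊆ f.support := Finset.filter_subset _ _
  obtain ⟨αc, hαcsupp, hαcj₀, hαcz⟩ := hconv j₀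
  have hαcT : αc ∈ T := by
    rw [hTdef, Finset.mem_filter]
    exact ⟨hαcsupp, fun i hi => hαcz i (fun h => hj₀ (h ▸ hi))⟩
  have hTne : T.Nonempty := ⟨αc, hαcT⟩
  -- weights
  set N : ℕ := f.totalDegree with hNdef
  have hcoordN : ∀ α ∈ f.support, ∀ i, α i ≤ N := by
    intro α hα i
    rcases Nat.eq_zero_or_pos (α i) with h | h
    · omega
    · have hi : i ∈ α.support := Finsupp.mem_support_iff.mpr (by omega)
      have h2 : α i ≤ ∑ j ∈ α.support, α j :=
        Finset.single_le_sum (f := fun j => α j) (fun _ _ => Nat.zero_le _) hi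
      exact le_trans h2 (MvPolynomial.le_totalDegree hα)
  set bw : ℕ → Fin n → ℝ := fun k i => if x k i = 0 then 0 else -Real.log ‖x k i‖ with hbwdef
  have hbwpos : ∀ k i, 0 ≤ bw k i := by
    intro k i
    rw [hbwdef]
    by_cases h : x k i = 0
    · simp [h]
    · simp only [h, if_false]
      have h1 : 0 < ‖x k i‖ := norm_pos_iff.mpr h
      have := Real.log_neg h1 (hxsmall k i)
      linarith
  set τ : ℕ → ℝ := fun k => ((N:ℝ)+1) * (1 + ∑ i, |bw k i|) with hτdef
  have habs_nonneg : ∀ k, 0 ≤ ∑ i, |bw k i| :=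
    fun k => Finset.sum_nonneg fun i _ => abs_nonneg _
  have hτpos : ∀ k, 0 ≤ τ k := by
    intro k
    rw [hτdef]
    have := habs_nonneg k
    positivity
  set w : ℕ → Fin n → ℝ := fun k i => if x k i = 0 then τ k else bw k i with hwdef
  have hwpos : ∀ k i, 0 ≤ w k i := by
    intro k i
    rw [hwdef]
    by_cases h : x k i = 0
    · simp only [h, if_true]; exact hτpos k
    · simp only [h, if_false]; exact hbwpos k i
  have hlogtop : ∀ i, i ∉ A → Tendsto (fun k => bw k i) (ℱ : Filter ℕ) atTop := by
    intro i hi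
    have hne : ∀ᶠ k in (ℱ : Filter ℕ), x k i ≠ 0 := by
      filter_upwards [hAiff] with k hk h0
      exact hi ((hk i).mp h0)
    have h1 : Tendsto (fun k => ‖x k i‖) (ℱ : Filter ℕ) (𝓝[≠] (0:ℝ)) := by
      rw [tendsto_nhdsWithin_iff]
      refine ⟨hxicoord i, ?_⟩
      filter_upwards [hne] with k hk
      simpa using norm_ne_zero_iff.mpr hk
    have h2 : Tendsto (fun k => Real.log ‖x k i‖) (ℱ : Filter ℕ) atBot :=
      Real.tendsto_log_nhdsNE_zero.comp h1
    have h3 : Tendsto (fun k => -Real.log ‖x k i‖) (ℱ : Filter ℕ) atTop :=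
      tendsto_neg_atBot_atTop.comp h2
    apply Tendsto.congr' _ h3
    filter_upwards [hne] with k hk
    rw [hbwdef]
    simp [hk]
  have hτtop : Tendsto τ (ℱ : Filter ℕ) atTop := by
    apply tendsto_atTop_mono' (ℱ : Filter ℕ) _ (hlogtop j₀ hj₀)
    filter_upwards with k
    have h1 : bw k j₀ ≤ |bw k j₀| := le_abs_self _
    have h2 : |bw k j₀| ≤ ∑ i, |bw k i| :=
      Finset.single_le_sum (f := fun i => |bw k i|) (fun i _ => abs_nonneg _) (Finset.mem_univ _)
    have h3 := habs_nonneg k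
    have hN : (0:ℝ) ≤ (N:ℝ) := Nat.cast_nonneg N
    simp only [hτdef]
    nlinarith
  have hW1 : ∀ i, Tendsto (fun k => w k i) (ℱ : Filter ℕ) atTop := by
    intro i
    by_cases hi : i ∈ A
    · apply Tendsto.congr' _ hτtop
      filter_upwards [hAiff] with k hk
      rw [hwdef]
      simp [(hk i).mpr hi]
    · apply Tendsto.congr' _ (hlogtop i hi)
      filter_upwards [hAiff] with k hk
      have : ¬ (x k i = 0) := fun h0 => hi ((hk i).mp h0)
      rw [hwdef, hbwdef]
      simp [this]
  -- the minimizing exponent and normalized magnitudes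
  set dotw : ℕ → (Fin n →₀ ℕ) → ℝ := fun k α => ∑ i, w k i * (α i : ℝ) with hdotwdef
  set D : ℕ → ℝ := fun k => T.inf' hTne (dotw k) with hDdef
  have hDle : ∀ k, ∀ α ∈ T, D k ≤ dotw k α := fun k α hα => Finset.inf'_le _ hα
  have hargmin : ∀ k : ℕ, ∃ α ∈ T, D k = dotw k α := fun k => T.exists_mem_eq_inf' hTne (dotw k)
  choose m hm1 hm2 using hargmin
  obtain ⟨α₀, hα₀T, hα₀ev⟩ := ultra_const ℱ hm1
  have hDα₀ : ∀ᶠ k in (ℱ : Filter ℕ), D k = dotw k α₀ := by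
    filter_upwards [hα₀ev] with k hk
    rw [hm2 k, hk]
  set lam : (Fin n →₀ ℕ) → ℕ → ℝ := fun α k => Real.exp (D k - dotw k α) with hlamdef
  have hlampos : ∀ α k, 0 < lam α k := fun α k => Real.exp_pos _
  have hlamIcc : ∀ α ∈ T, ∀ k, lam α k ∈ Set.Icc (0:ℝ) 1 := by
    intro α hα k
    refine ⟨(hlampos α k).le, ?_⟩
    rw [hlamdef]
    have := hDle k α hα
    calc Real.exp (D k - dotw k α) ≤ Real.exp 0 := Real.exp_le_exp.mpr (by linarith)
      _ = 1 := Real.exp_zero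
  have hkey : ∀ α : Fin n →₀ ℕ, ∃ c ∈ Set.Icc (0:ℝ) 1,
      (α ∈ T → Tendsto (lam α) (ℱ : Filter ℕ) (𝓝 c)) := by
    intro α
    by_cases hα : α ∈ T
    · obtain ⟨c, hc, htd⟩ := ultra_limit ℱ isCompact_Icc
        (Filter.Eventually.of_forall (hlamIcc α hα))
      exact ⟨c, hc, fun _ => htd⟩
    · exact ⟨0, ⟨le_refl 0, zero_le_one⟩, fun h => absurd h hα⟩
  choose Λ hΛIcc hΛtd using hkey
  set S' : Finset (Fin n →₀ ℕ) := T.filter (fun α => Λ α ≠ 0) with hS'def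
  have hS'T : S' ⊆ T := Finset.filter_subset _ _
  have hΛpos : ∀ α ∈ S', 0 < Λ α := by
    intro α hα
    rw [hS'def, Finset.mem_filter] at hα
    exact lt_of_le_of_ne (hΛIcc α).1 (Ne.symm hα.2)
  have hlamα₀ : ∀ᶠ k in (ℱ : Filter ℕ), lam α₀ k = 1 := by
    filter_upwards [hDα₀] with k hk
    rw [hlamdef]
    simp only []
    rw [hk, sub_self, Real.exp_zero]
  have hΛα₀ : Λ α₀ = 1 :=
    tendsto_nhds_unique (hΛtd α₀ hα₀T)
      (Tendsto.congr' (hlamα₀.mono fun k hk => hk.symm) tendsto_const_nhds)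
  have hα₀S' : α₀ ∈ S' := by
    rw [hS'def, Finset.mem_filter]
    exact ⟨hα₀T, by rw [hΛα₀]; exact one_ne_zero⟩
  -- phases
  set φp : ℕ → Fin n → ℂ := fun k i => if x k i = 0 then 1 else x k i / (‖x k i‖ : ℂ) with hφpdef
  have hφnorm1 : ∀ k i, ‖φp k i‖ = 1 := by
    intro k i
    rw [hφpdef]
    by_cases h : x k i = 0
    · simp [h]
    · have h1 : ‖x k i‖ ≠ 0 := norm_ne_zero_iff.mpr h
      simp only [h, if_false, norm_div, Complex.norm_real, Real.norm_eq_abs, abs_norm]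
      exact div_self h1
  have hφkey : ∀ i, ∃ c : ℂ, ‖c‖ = 1 ∧ Tendsto (fun k => φp k i) (ℱ : Filter ℕ) (𝓝 c) := by
    intro i
    obtain ⟨c, hc, htd⟩ := ultra_limit ℱ (isCompact_sphere (0:ℂ) 1)
      (Filter.Eventually.of_forall (fun k => by
        rw [mem_sphere_zero_iff_norm]; exact hφnorm1 k i))
    rw [mem_sphere_zero_iff_norm] at hc
    exact ⟨c, hc, htd⟩
  choose φh hφhnorm hφhtd using hφkey
  -- the limit linear data
  set toR : (Fin n →₀ ℕ) → (Fin n → ℝ) := fun α i => (α i : ℝ) with htoRdef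
  set ℓ : (Fin n →₀ ℕ) → ℝ := fun α => - Real.log (Λ α) with hℓdef
  have hdot_sub : ∀ k (α β : Fin n →₀ ℕ),
      ∑ i, w k i * (toR α i - toR β i) = dotw k α - dotw k β := by
    intro k α β
    rw [hdotwdef]
    simp only []
    rw [← Finset.sum_sub_distrib]
    apply Finset.sum_congr rfl
    intro i _
    rw [htoRdef]
    ring
  have hW2 : ∀ a ∈ S', Tendsto (fun k => ∑ i, w k i * (toR a i - toR α₀ i))
      (ℱ : Filter ℕ) (𝓝 (ℓ a)) := by
    intro a ha
    have h1 : Tendsto (fun k => - Real.log (lam a k)) (ℱ : Filter ℕ) (𝓝 (ℓ a)) := by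
      rw [hℓdef]
      have hcont := (Real.continuousAt_log (ne_of_gt (hΛpos a ha))).tendsto
      exact (hcont.comp (hΛtd a (hS'T ha))).neg
    apply Tendsto.congr' _ h1
    filter_upwards [hDα₀] with k hk
    rw [hdot_sub k a α₀, hlamdef]
    simp only []
    rw [Real.log_exp, ← hk]
    ring
  have hW3 : ∀ b ∈ f.support \ S', Tendsto (fun k => ∑ i, w k i * (toR b i - toR α₀ i))
      (ℱ : Filter ℕ) atTop := by
    intro b hb
    rw [Finset.mem_sdiff] at hb
    obtain ⟨hbsupp, hbS'⟩ := hb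
    by_cases hbT : b ∈ T
    · -- Λ b = 0
      have hΛb : Λ b = 0 := by
        by_contra hne
        exact hbS' (by rw [hS'def, Finset.mem_filter]; exact ⟨hbT, hne⟩)
      have h1 : Tendsto (lam b) (ℱ : Filter ℕ) (𝓝[≠] (0:ℝ)) := by
        rw [tendsto_nhdsWithin_iff]
        refine ⟨by rw [← hΛb]; exact hΛtd b hbT, ?_⟩
        filter_upwards with k
        simpa using (hlampos b k).ne'
      have h2 : Tendsto (fun k => - Real.log (lam b k)) (ℱ : Filter ℕ) atTop :=
        tendsto_neg_atBot_atTop.comp (Real.tendsto_log_nhdsNE_zero.comp h1)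
      apply Tendsto.congr' _ h2
      filter_upwards [hDα₀] with k hk
      rw [hdot_sub k b α₀, hlamdef]
      simp only []
      rw [Real.log_exp, ← hk]
      ring
    · -- b has a positive exponent in the zero block A
      have hexA : ∃ i₁ ∈ A, b i₁ ≠ 0 := by
        by_contra hno
        push_neg at hno
        exact hbT (by rw [hTdef, Finset.mem_filter]; exact ⟨hbsupp, hno⟩)
      obtain ⟨i₁, hi₁A, hi₁b⟩ := hexA
      have hlow : Tendsto (fun k => 1 + ∑ i, |bw k i|) (ℱ : Filter ℕ) atTop := by
        apply tendsto_atTop_mono' (ℱ : Filter ℕ) _ (hlogtop j₀ hj₀)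
        filter_upwards with k
        have h1 : bw k j₀ ≤ |bw k j₀| := le_abs_self _
        have h2 : |bw k j₀| ≤ ∑ i, |bw k i| :=
          Finset.single_le_sum (f := fun i => |bw k i|) (fun i _ => abs_nonneg _)
            (Finset.mem_univ _)
        linarith
      apply tendsto_atTop_mono' (ℱ : Filter ℕ) _ hlow
      filter_upwards [hAiff] with k hk
      -- lower bound for dotw k b
      have hb1 : τ k ≤ dotw k b := by
        rw [hdotwdef]
        simp only []
        have hterm : τ k ≤ w k i₁ * (b i₁ : ℝ) := by
          have hxz : x k i₁ = 0 := (hk i₁).mpr hi₁A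
          have hw : w k i₁ = τ k := by rw [hwdef]; simp [hxz]
          rw [hw]
          have hcast : (1:ℝ) ≤ (b i₁ : ℝ) := by
            have : 1 ≤ b i₁ := Nat.one_le_iff_ne_zero.mpr hi₁b
            exact_mod_cast this
          nlinarith [hτpos k]
        calc τ k ≤ w k i₁ * (b i₁ : ℝ) := hterm
          _ ≤ ∑ i, w k i * (b i : ℝ) := by
            apply Finset.single_le_sum (f := fun i => w k i * (b i : ℝ)) _ (Finset.mem_univ i₁)
            intro i _
            have := hwpos k i
            positivity
      -- upper bound for dotw k α₀
      have hb2 : dotw k α₀ ≤ (N:ℝ) * (1 + ∑ i, |bw k i|) := by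
        rw [hdotwdef]
        simp only []
        have hstep : ∀ i, w k i * (α₀ i : ℝ) ≤ (N:ℝ) * |bw k i| := by
          intro i
          by_cases hiA : i ∈ A
          · have hz : α₀ i = 0 := by
              have := hα₀T
              rw [hTdef, Finset.mem_filter] at this
              exact this.2 i hiA
            rw [hz]
            simp only [Nat.cast_zero, mul_zero]
            positivity
          · have hxnz : ¬ (x k i = 0) := fun h0 => hiA ((hk i).mp h0)
            have hwi : w k i = bw k i := by rw [hwdef]; simp [hxnz]
            rw [hwi]
            have h1 : bw k i ≤ |bw k i| := le_abs_self _
            have h2 : (α₀ i : ℝ) ≤ (N:ℝ) := by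
              exact_mod_cast hcoordN α₀ (hTsub hα₀T) i
            have h3 : (0:ℝ) ≤ (α₀ i : ℝ) := Nat.cast_nonneg _
            have h4 : 0 ≤ bw k i := hbwpos k i
            nlinarith [abs_nonneg (bw k i)]
        calc ∑ i, w k i * (α₀ i : ℝ) ≤ ∑ i, (N:ℝ) * |bw k i| :=
              Finset.sum_le_sum (fun i _ => hstep i)
          _ = (N:ℝ) * ∑ i, |bw k i| := by rw [Finset.mul_sum]
          _ ≤ (N:ℝ) * (1 + ∑ i, |bw k i|) := by
              have := habs_nonneg k
              have hN : (0:ℝ) ≤ (N:ℝ) := Nat.cast_nonneg N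
              nlinarith
      rw [hdot_sub k b α₀]
      have hτval : τ k = ((N:ℝ)+1) * (1 + ∑ i, |bw k i|) := by rw [hτdef]
      nlinarith [hb1, hb2, habs_nonneg k]
  obtain ⟨p, hp0, hpS, hpB, g, hgS⟩ :=
    core_la ℱ w S' (f.support \ S') toR (toR α₀) ℓ hW1 hW2 hW3
  -- the supporting functional and the face
  set lp : (Fin n → ℝ) → ℝ := fun y => ∑ i, p i * y i with hlpdef
  set d' : ℝ := lp (toR α₀) with hd'def
  have hlpdiff : ∀ y z : Fin n → ℝ, lp y - lp z = ∑ i, p i * (y i - z i) := by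
    intro y z
    rw [hlpdef]
    simp only []
    rw [← Finset.sum_sub_distrib]
    apply Finset.sum_congr rfl
    intro i _
    ring
  have hlpS : ∀ a ∈ S', lp (toR a) = d' := by
    intro a ha
    have h1 := hpS a ha
    have h2 := hlpdiff (toR a) (toR α₀)
    rw [h1] at h2
    rw [hd'def]
    linarith
  have hlpB : ∀ β ∈ f.support, β ∉ S' → d' < lp (toR β) := by
    intro β hβ hn
    have h1 := hpB β (Finset.mem_sdiff.mpr ⟨hβ, hn⟩)
    have h2 := hlpdiff (toR β) (toR α₀)
    rw [← h2] at h1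
    rw [hd'def]
    linarith
  have hlpsupp : ∀ β ∈ f.support, d' ≤ lp (toR β) := by
    intro β hβ
    by_cases hβS : β ∈ S'
    · exact le_of_eq (hlpS β hβS).symm
    · exact (hlpB β hβ hβS).le
  have hlplin : ∀ (a b : ℝ) (y z : Fin n → ℝ), lp (a • y + b • z) = a * lp y + b * lp z := by
    intro a b y z
    rw [hlpdef]
    simp only []
    rw [Finset.mul_sum, Finset.mul_sum, ← Finset.sum_add_distrib]
    apply Finset.sum_congr rfl
    intro i _
    simp only [Pi.add_apply, Pi.smul_apply, smul_eq_mul]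
    ring
  set Fc : Set (Fin n → ℝ) := convexHull ℝ (toR '' (S' : Set (Fin n →₀ ℕ))) with hFcdef
  have hgen : ∀ α ∈ f.support, toR α ∈ NewtonPolyhedron f := by
    intro α hα
    apply subset_convexHull
    exact Set.mem_biUnion (show α ∈ (f.support : Set (Fin n →₀ ℕ)) from hα)
      (fun i => le_refl ((α i : ℝ)))
  have hFcsub : Fc ⊆ NewtonPolyhedron f := by
    rw [hFcdef]
    apply convexHull_min _ (convex_convexHull ℝ _)
    rintro y ⟨a, ha, rfl⟩
    exact hgen a (hTsub (hS'T ha))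
  have hFclp : ∀ y ∈ Fc, lp y = d' := by
    have hsub : Fc ⊆ {y | lp y = d'} := by
      rw [hFcdef]
      apply convexHull_min
      · rintro y ⟨a, ha, rfl⟩
        exact hlpS a ha
      · intro y₁ h1 y₂ h2 a b ha hb hab
        show lp (a • y₁ + b • y₂) = d'
        rw [hlplin, h1, h2]
        linear_combination d' * hab
    exact fun y hy => hsub hy
  have hG : ∀ y ∈ NewtonPolyhedron f, (∀ i, 0 ≤ y i) ∧ d' ≤ lp y ∧ (lp y = d' → y ∈ Fc) := by
    have hsub : NewtonPolyhedron f ⊆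
        {y | (∀ i, 0 ≤ y i) ∧ d' ≤ lp y ∧ (lp y = d' → y ∈ Fc)} := by
      apply convexHull_min
      · rintro z hz
        rw [Set.mem_iUnion₂] at hz
        obtain ⟨α, hα, hz'⟩ := hz
        have hz'' : ∀ i, (α i : ℝ) ≤ z i := hz'
        have hcoordpos : ∀ i, (0:ℝ) ≤ z i := fun i => le_trans (Nat.cast_nonneg _) (hz'' i)
        have hdiff : lp z - lp (toR α) = ∑ i, p i * (z i - toR α i) := hlpdiff z (toR α)
        have hnn : ∀ i ∈ Finset.univ, 0 ≤ p i * (z i - toR α i) := by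
          intro i _
          have h1 := (hp0 i).le
          have h2 : toR α i ≤ z i := hz'' i
          nlinarith
        have hnn' : 0 ≤ ∑ i, p i * (z i - toR α i) := Finset.sum_nonneg hnn
        have hαsupp : α ∈ f.support := hα
        refine ⟨hcoordpos, by linarith [hlpsupp α hαsupp], ?_⟩
        intro heq
        have hkey1 : lp (toR α) = d' := by
          have := hlpsupp α hαsupp
          linarith
        have hkey2 : ∑ i, p i * (z i - toR α i) = 0 := by linarith
        have hαS' : α ∈ S' := by
          by_contra hn
          have := hlpB α hαsupp hn
          linarith
        have hzeq : z = toR α := by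
          funext i
          have hterm := (Finset.sum_eq_zero_iff_of_nonneg hnn).mp hkey2 i (Finset.mem_univ i)
          have hpi := hp0 i
          have : z i - toR α i = 0 := by
            rcases mul_eq_zero.mp hterm with h | h
            · exact absurd h (ne_of_gt hpi)
            · exact h
          linarith [this]
        rw [hzeq]
        exact subset_convexHull ℝ _ ⟨α, hαS', rfl⟩
      · rintro y₁ ⟨h1a, h1b, h1c⟩ y₂ ⟨h2a, h2b, h2c⟩ a b ha hb hab
        refine ⟨?_, ?_, ?_⟩
        · intro i
          have := h1a i
          have := h2a i
          simp only [Pi.add_apply, Pi.smul_apply, smul_eq_mul]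
          nlinarith
        · rw [hlplin]
          have h0 : a * d' + b * d' = d' := by linear_combination d' * hab
          linarith [mul_le_mul_of_nonneg_left h1b ha, mul_le_mul_of_nonneg_left h2b hb]
        · intro heq
          rw [hlplin] at heq
          rcases eq_or_lt_of_le ha with ha0 | hapos
          · have hb1 : b = 1 := by linarith
            have hpt : a • y₁ + b • y₂ = y₂ := by
              rw [← ha0, hb1]
              simp
            rw [hpt]
            apply h2c
            rw [← ha0, hb1] at heq
            linarith
          · rcases eq_or_lt_of_le hb with hb0 | hbpos
            · have ha1 : a = 1 := by linarith
              have hpt : a • y₁ + b • y₂ = y₁ := by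
                rw [← hb0, ha1]
                simp
              rw [hpt]
              apply h1c
              rw [← hb0, ha1] at heq
              linarith
            · obtain ⟨hl1, hl2⟩ := seg_eq hapos hbpos hab h1b h2b heq
              exact (convex_convexHull ℝ _) (h1c hl1) (h2c hl2) ha hb hab
    exact fun y hy => hsub hy
  have hFcExtreme : IsExtreme ℝ (NewtonPolyhedron f) Fc := by
    constructor
    · exact hFcsub
    · rintro y₁ hy₁ y₂ hy₂ z hzF ⟨a, b, ha, hb, hab, hz⟩
      obtain ⟨-, h1b, h1c⟩ := hG y₁ hy₁
      obtain ⟨-, h2b, h2c⟩ := hG y₂ hy₂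
      have hlpz : lp z = d' := hFclp z hzF
      rw [← hz, hlplin] at hlpz
      obtain ⟨h1, h2⟩ := seg_eq ha hb hab h1b h2b hlpz
      exact h1c h1
  have hFcface : IsFaceOf (NewtonPolyhedron f) Fc :=
    ⟨hFcExtreme, convex_convexHull ℝ _, ⟨toR α₀, subset_convexHull ℝ _ ⟨α₀, hα₀S', rfl⟩⟩⟩
  have hFccpt : IsCompact Fc := ((S'.finite_toSet).image toR).isCompact_convexHull ℝ
  have hmemF : ∀ α ∈ f.support, ((fun i => (α i : ℝ)) ∈ Fc ↔ α ∈ S') := by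
    intro α hα
    constructor
    · intro hmem
      by_contra hn
      have h1 := hlpB α hα hn
      have h2 := hFclp _ hmem
      have h3 : lp (toR α) = d' := h2
      linarith
    · intro hmem
      exact subset_convexHull ℝ _ ⟨α, hmem, rfl⟩
  -- the torus point u
  set u : Fin n → ℂ := fun i => if i ∈ A then 1 else
    ((Real.exp (- g (Pi.single i 1)) : ℝ) : ℂ) * φh i with hudef
  have hu : ∀ i, u i ≠ 0 := by
    intro i
    rw [hudef]
    by_cases hi : i ∈ A
    · simp [hi]
    · simp only [hi, if_false]
      apply mul_ne_zero
      · exact Complex.ofReal_ne_zero.mpr (Real.exp_pos _).ne'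
      · intro h0
        have := hφhnorm i
        rw [h0] at this
        simp at this
  set Φh : (Fin n →₀ ℕ) → ℂ := fun α => ∏ i, φh i ^ (α i) with hΦhdef
  set C₀ : ℝ := Real.exp (- g (toR α₀)) with hC₀def
  have hPu : ∀ α ∈ S', Pmon α u = ((C₀ * Λ α : ℝ) : ℂ) * Φh α := by
    intro α hα
    have hαT : α ∈ T := hS'T hα
    have hαA : ∀ i ∈ A, α i = 0 := by
      rw [hTdef, Finset.mem_filter] at hαT
      exact hαT.2
    have hfac : ∀ i, u i ^ (α i)
        = ((Real.exp (- g (Pi.single i 1)) : ℝ) : ℂ) ^ (α i) * (φh i) ^ (α i) := by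
      intro i
      by_cases hi : i ∈ A
      · rw [hudef]
        simp [hi, hαA i hi]
      · rw [hudef]
        simp only [hi, if_false]
        rw [mul_pow]
    have hreal : ∏ i, Real.exp (- g (Pi.single i 1)) ^ (α i) = C₀ * Λ α := by
      have h1 : ∀ i, Real.exp (- g (Pi.single i 1)) ^ (α i)
          = Real.exp ((α i : ℝ) * (- g (Pi.single i 1))) := by
        intro i
        rw [Real.exp_nat_mul]
      rw [Finset.prod_congr rfl (fun i _ => h1 i), ← Real.exp_sum]
      have h2 : ∑ i, (α i : ℝ) * (- g (Pi.single i 1)) = - g (toR α) := by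
        rw [g_expand g (toR α)]
        rw [← Finset.sum_neg_distrib]
        apply Finset.sum_congr rfl
        intro i _
        rw [htoRdef]
        ring
      rw [h2]
      have h3 : g (toR α) - g (toR α₀) = ℓ α := by
        rw [← map_sub]
        exact hgS α hα
      have h4 : - g (toR α) = Real.log (Λ α) + (- g (toR α₀)) := by
        have h5 : ℓ α = - Real.log (Λ α) := by rw [hℓdef]
        rw [h5] at h3
        linarith
      rw [h4, Real.exp_add, Real.exp_log (hΛpos α hα), hC₀def]
      ring
    calc Pmon α u = ∏ i, (((Real.exp (- g (Pi.single i 1)) : ℝ) : ℂ) ^ (α i)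
          * (φh i) ^ (α i)) := Finset.prod_congr rfl (fun i _ => hfac i)
      _ = (∏ i, ((Real.exp (- g (Pi.single i 1)) : ℝ) : ℂ) ^ (α i)) * Φh α := by
          rw [Finset.prod_mul_distrib, hΦhdef]
      _ = ((∏ i, Real.exp (- g (Pi.single i 1)) ^ (α i) : ℝ) : ℂ) * Φh α := by
          push_cast
          ring
      _ = ((C₀ * Λ α : ℝ) : ℂ) * Φh α := by rw [hreal]
  -- eventual identity between normalized monomials and the limit data
  have hgoodP : ∀ᶠ k in (ℱ : Filter ℕ), ∀ α ∈ T,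
      Pmon α (x k) * ((Real.exp (D k) : ℝ) : ℂ)
        = ((lam α k : ℝ) : ℂ) * ∏ i, (φp k i) ^ (α i) := by
    filter_upwards [hAiff] with k hk
    intro α hαT
    have hαA : ∀ i ∈ A, α i = 0 := by
      rw [hTdef, Finset.mem_filter] at hαT
      exact hαT.2
    have hαT' : α ∈ T := hαT
    have hfac : ∀ i, (x k i) ^ (α i)
        = ((‖x k i‖ : ℝ) : ℂ) ^ (α i) * (φp k i) ^ (α i) := by
      intro i
      by_cases hz : x k i = 0
      · have h0 : α i = 0 := hαA i ((hk i).mp hz)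
        simp [h0]
      · rw [hφpdef]
        simp only [hz, if_false]
        rw [← mul_pow]
        congr 1
        have hn : ((‖x k i‖ : ℝ) : ℂ) ≠ 0 :=
          Complex.ofReal_ne_zero.mpr (norm_ne_zero_iff.mpr hz)
        rw [mul_comm, div_mul_cancel₀ _ hn]
    have hnorm : ∏ i, ‖x k i‖ ^ (α i) = Real.exp (- dotw k α) := by
      have h1 : ∀ i, ‖x k i‖ ^ (α i) = Real.exp (- (w k i * (α i : ℝ))) := by
        intro i
        by_cases hz : x k i = 0
        · have h0 : α i = 0 := hαA i ((hk i).mp hz)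
          simp [h0]
        · have hw : w k i = - Real.log ‖x k i‖ := by
            rw [hwdef, hbwdef]
            simp [hz]
          rw [hw]
          have : - (- Real.log ‖x k i‖ * (α i : ℝ)) = (α i : ℝ) * Real.log ‖x k i‖ := by ring
          rw [this, Real.exp_nat_mul, Real.exp_log (norm_pos_iff.mpr hz)]
      rw [Finset.prod_congr rfl (fun i _ => h1 i), ← Real.exp_sum]
      congr 1
      rw [hdotwdef]
      simp only []
      rw [← Finset.sum_neg_distrib]
    calc Pmon α (x k) * ((Real.exp (D k) : ℝ) : ℂ)
        = ((∏ i, ((‖x k i‖ : ℝ) : ℂ) ^ (α i)) * ∏ i, (φp k i) ^ (α i))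
          * ((Real.exp (D k) : ℝ) : ℂ) := by
          rw [show Pmon α (x k) = ∏ i, (x k i) ^ (α i) from rfl,
            Finset.prod_congr rfl (fun i _ => hfac i), Finset.prod_mul_distrib]
      _ = (((Real.exp (- dotw k α) * Real.exp (D k) : ℝ)) : ℂ) * ∏ i, (φp k i) ^ (α i) := by
          have hcast : (∏ i, ((‖x k i‖ : ℝ) : ℂ) ^ (α i))
              = ((∏ i, ‖x k i‖ ^ (α i) : ℝ) : ℂ) := by
            push_cast
            ring
          rw [hcast, hnorm]
          push_cast
          ring
      _ = ((lam α k : ℝ) : ℂ) * ∏ i, (φp k i) ^ (α i) := by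
          rw [← Real.exp_add, hlamdef]
          have : - dotw k α + D k = D k - dotw k α := by ring
          rw [this]
  -- the limit lemma
  have hlimit : ∀ c : (Fin n →₀ ℕ) → ℂ,
      (∀ᶠ k in (ℱ : Filter ℕ), ∑ α ∈ T, coeff α f * c α * Pmon α (x k) = 0) →
      ∑ α ∈ T, coeff α f * c α * ((Λ α : ℂ) * Φh α) = 0 := by
    intro c hev
    have htd : Tendsto
        (fun k => ∑ α ∈ T, coeff α f * c α * (((lam α k : ℝ) : ℂ) * ∏ i, (φp k i) ^ (α i)))
        (ℱ : Filter ℕ) (𝓝 (∑ α ∈ T, coeff α f * c α * ((Λ α : ℂ) * Φh α))) := by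
      apply tendsto_finset_sum
      intro α hαT
      apply Tendsto.const_mul
      apply Tendsto.mul
      · exact (Complex.continuous_ofReal.tendsto _).comp (hΛtd α hαT)
      · rw [hΦhdef]
        apply tendsto_finset_prod
        intro i _
        exact (hφhtd i).pow _
    have hev2 : ∀ᶠ k in (ℱ : Filter ℕ),
        ∑ α ∈ T, coeff α f * c α * (((lam α k : ℝ) : ℂ) * ∏ i, (φp k i) ^ (α i)) = 0 := by
      filter_upwards [hgoodP, hev] with k hk1 hk2
      have hstep : ∑ α ∈ T, coeff α f * c α * (((lam α k : ℝ) : ℂ) * ∏ i, (φp k i) ^ (α i))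
          = (∑ α ∈ T, coeff α f * c α * Pmon α (x k)) * ((Real.exp (D k) : ℝ) : ℂ) := by
        rw [Finset.sum_mul]
        apply Finset.sum_congr rfl
        intro α hαT
        rw [← hk1 α hαT]
        ring
      rw [hstep, hk2, zero_mul]
    exact tendsto_nhds_unique htd
      (Tendsto.congr' (hev2.mono fun k hk => hk.symm) tendsto_const_nhds)
  -- vanishing of the two families of sums
  have hsum_supp_T : ∀ᶠ k in (ℱ : Filter ℕ), ∀ c : (Fin n →₀ ℕ) → ℂ,
      ∑ α ∈ T, coeff α f * c α * Pmon α (x k)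
        = ∑ α ∈ f.support, coeff α f * c α * Pmon α (x k) := by
    filter_upwards [hAiff] with k hk c
    apply Finset.sum_subset hTsub
    intro α hαs hαT
    have hex : ∃ i ∈ A, α i ≠ 0 := by
      by_contra hno
      push_neg at hno
      exact hαT (by rw [hTdef, Finset.mem_filter]; exact ⟨hαs, hno⟩)
    obtain ⟨i, hiA, hi0⟩ := hex
    rw [Pmon_eq_zero ((hk i).mpr hiA) hi0, mul_zero]
  have hEA : ∑ α ∈ T, coeff α f * 1 * ((Λ α : ℂ) * Φh α) = 0 := by
    apply hlimit
    filter_upwards [hsum_supp_T] with k hk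
    rw [hk]
    have h1 := hxf k
    rw [eval_eq_sum'] at h1
    rw [← h1]
    apply Finset.sum_congr rfl
    intro α hα
    ring
  have hEB : ∀ j, ∑ α ∈ T, coeff α f * ((α j : ℕ) : ℂ) * ((Λ α : ℂ) * Φh α) = 0 := by
    intro j
    apply hlimit
    filter_upwards [hsum_supp_T] with k hk
    rw [hk]
    have h1 := mul_eval_pderiv f (x k) j
    rw [hxd k j, mul_zero] at h1
    exact h1.symm
  -- evaluation of the face polynomial
  have hfilter : f.support.filter (fun α => α ∈ S') = S' := by
    ext α
    rw [Finset.mem_filter]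
    constructor
    · exact fun h => h.2
    · exact fun h => ⟨hTsub (hS'T h), h⟩
  have hface_eval : ∀ v : Fin n → ℂ,
      MvPolynomial.eval v (facePoly f Fc) = ∑ α ∈ S', coeff α f * Pmon α v := by
    intro v
    unfold facePoly
    rw [map_sum]
    have hterm : ∀ α ∈ f.support,
        MvPolynomial.eval v (if (fun i => (α i : ℝ)) ∈ Fc
            then MvPolynomial.monomial α (coeff α f) else 0)
          = if α ∈ S' then coeff α f * Pmon α v else 0 := by
      intro α hα
      rw [apply_ite (MvPolynomial.eval v), map_zero, eval_monomial']
      exact if_congr (hmemF α hα) rfl rfl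
    rw [Finset.sum_congr rfl hterm, ← Finset.sum_filter, hfilter]
  have hΛzero : ∀ α ∈ T, α ∉ S' → Λ α = 0 := by
    intro α hαT hαS'
    by_contra hne
    exact hαS' (by rw [hS'def, Finset.mem_filter]; exact ⟨hαT, hne⟩)
  have heval0 : MvPolynomial.eval u (facePoly f Fc) = 0 := by
    rw [hface_eval u]
    have hstep : ∑ α ∈ S', coeff α f * Pmon α u
        = (C₀ : ℂ) * ∑ α ∈ T, coeff α f * 1 * ((Λ α : ℂ) * Φh α) := by
      rw [Finset.mul_sum]
      rw [← Finset.sum_subset hS'T (fun α hαT hαS' => by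
        rw [hΛzero α hαT hαS']
        push_cast
        ring)]
      apply Finset.sum_congr rfl
      intro α hα
      rw [hPu α hα]
      push_cast
      ring
    rw [hstep, hEA, mul_zero]
  have hderiv0 : ∀ j, MvPolynomial.eval u (MvPolynomial.pderiv j (facePoly f Fc)) = 0 := by
    intro j
    have hmul : u j * MvPolynomial.eval u (MvPolynomial.pderiv j (facePoly f Fc))
        = ∑ α ∈ S', coeff α f * ((α j : ℕ) : ℂ) * Pmon α u := by
      unfold facePoly
      rw [map_sum (MvPolynomial.pderiv j), map_sum (MvPolynomial.eval u), Finset.mul_sum]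
      have hterm : ∀ α ∈ f.support,
          u j * MvPolynomial.eval u (MvPolynomial.pderiv j
            (if (fun i => (α i : ℝ)) ∈ Fc then MvPolynomial.monomial α (coeff α f) else 0))
          = if α ∈ S' then coeff α f * ((α j : ℕ) : ℂ) * Pmon α u else 0 := by
        intro α hα
        rw [apply_ite (MvPolynomial.pderiv j), map_zero, apply_ite (MvPolynomial.eval u),
          map_zero, mul_ite, mul_zero]
        rw [mul_eval_pderiv_monomial]
        exact if_congr (hmemF α hα) rfl rfl
      rw [Finset.sum_congr rfl hterm, ← Finset.sum_filter, hfilter]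
    have hz : ∑ α ∈ S', coeff α f * ((α j : ℕ) : ℂ) * Pmon α u = 0 := by
      have hstep : ∑ α ∈ S', coeff α f * ((α j : ℕ) : ℂ) * Pmon α u
          = (C₀ : ℂ) * ∑ α ∈ T, coeff α f * ((α j : ℕ) : ℂ) * ((Λ α : ℂ) * Φh α) := by
        rw [Finset.mul_sum]
        rw [← Finset.sum_subset hS'T (fun α hαT hαS' => by
          rw [hΛzero α hαT hαS']
          push_cast
          ring)]
        apply Finset.sum_congr rfl
        intro α hα
        rw [hPu α hα]
        push_cast
        ring
      rw [hstep, hEB j, mul_zero]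
    exact (mul_eq_zero.mp (hmul.trans hz)).resolve_left (hu j)
  obtain ⟨i, hi⟩ := hnd Fc hFcface hFccpt u hu heval0
  exact hi (hderiv0 i)





end
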